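/- Failure of additivity for untwisted G₂: with the G₂ positive roots realized in ℤ², the minimal number of positive roots (with repetitions) summing to 14α₁ + 8α₂ is 5, while the minimal number summing to 4α₁ + 2α₂ is 2 and the minimal number summing to 6α₁ + 4α₂ is 2. Equivalently, for λ = 2ω₁ + ω₂ (where ω₁ = 2α₁+α₂, ω₂ = 3α₁+2α₂) and w₀ = −id, n(λ, w₀) = 5 < 6 = 2·n(ω₁, w₀) + n(ω₂, w₀); in particular n(·, w₀) is not additive on dominant weights of G₂. -/

import Mathlib

/-- The positive roots of `G₂` in the basis of the simple roots `α₁ = (1,0)`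
(short) and `α₂ = (0,1)` (long). -/
def g2PositiveRoots : Set (ℤ × ℤ) :=
  {(1, 0), (0, 1), (1, 1), (2, 1), (3, 1), (3, 2)}

/-- The set of lengths of decompositions of `v` into a sum of positive roots of
`G₂` (with repetitions). -/
def g2DecompLengths (v : ℤ × ℤ) : Set ℕ :=
  {N | ∃ l : List (ℤ × ℤ),
    (∀ u ∈ l, u ∈ g2PositiveRoots) ∧ l.sum = v ∧ l.length = N}

lemma g2_first_le (l : List (ℤ × ℤ)) (h : ∀ u ∈ l, u ∈ g2PositiveRoots) :
    l.sum.1 ≤ 3 * l.length := by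
  induction l with
  | nil => simp
  | cons a t ih =>
    have ha : a ∈ g2PositiveRoots := h a List.mem_cons_self
    have ha1 : a.1 ≤ 3 := by
      simp only [g2PositiveRoots, Set.mem_insert_iff, Set.mem_singleton_iff] at ha
      rcases ha with h | h | h | h | h | h <;> simp [h]
    have ht := ih (fun u hu => h u (List.mem_cons_of_mem a hu))
    simp only [List.sum_cons, List.length_cons, Prod.fst_add]
    push_cast
    linarith

lemma g2_lb (v : ℤ × ℤ) (N : ℕ) (hN : N ∈ g2DecompLengths v) : v.1 ≤ 3 * N := by
  obtain ⟨l, hl, hs, hlen⟩ := hN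
  have := g2_first_le l hl
  rw [hs, hlen] at this
  exact this

lemma g2_mem (v : ℤ × ℤ) (l : List (ℤ × ℤ)) (h : ∀ u ∈ l, u ∈ g2PositiveRoots)
    (hs : l.sum = v) : l.length ∈ g2DecompLengths v := ⟨l, h, hs, rfl⟩

/-- Failure of additivity for untwisted `G₂`: the minimal number of positive
roots summing to `14α₁ + 8α₂` is `5`, while for `4α₁ + 2α₂` it is `2` and for
`6α₁ + 4α₂` it is `2`.  Equivalently, for `λ = 2ω₁ + ω₂` (with `ω₁ = 2α₁ + α₂`,
`ω₂ = 3α₁ + 2α₂`) and `w₀ = -id`: `λ - w₀(λ) = 14α₁ + 8α₂`,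
`ω₁ - w₀(ω₁) = 4α₁ + 2α₂`, `ω₂ - w₀(ω₂) = 6α₁ + 4α₂`, and
`n(λ,w₀) = 5 < 6 = 2·n(ω₁,w₀) + n(ω₂,w₀)`. -/
theorem g2_additivity_failure :
    IsLeast (g2DecompLengths (14, 8)) 5 ∧
    IsLeast (g2DecompLengths (4, 2)) 2 ∧
    IsLeast (g2DecompLengths (6, 4)) 2 := by
  refine ⟨⟨?_, ?_⟩, ⟨?_, ?_⟩, ⟨?_, ?_⟩⟩
  · exact g2_mem _ [(3,2),(3,2),(3,2),(3,1),(2,1)]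
      (by intro u hu; fin_cases hu <;> simp [g2PositiveRoots]) (by decide)
  · intro N hN
    have := g2_lb _ N hN
    simp only at this
    omega
  · exact g2_mem _ [(2,1),(2,1)]
      (by intro u hu; fin_cases hu <;> simp [g2PositiveRoots]) (by decide)
  · intro N hN
    have := g2_lb _ N hN
    simp only at this
    omega
  · exact g2_mem _ [(3,2),(3,2)]
      (by intro u hu; fin_cases hu <;> simp [g2PositiveRoots]) (by decide)
  · intro N hN
    have := g2_lb _ N hN
    simp only at this
    omega
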